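/- Let n ≥ 1 be an integer and K > 0, and define f(b) := ψ(b)/ψ'(b) − φ_{nK}(b)/φ_{nK}'(b) for b ≥ 0. Then for every b ≥ 0 one has (σ(b)²/2)·f'(b) ≥ (ψ(b)/ψ'(b))·(nK − r·f(b)). In particular, f is nondecreasing at every point b where f(b) ≤ nK/r. -/

import Mathlib

open Set Filter

set_option maxHeartbeats 1000000 in
/-- the key differential inequality for
f(b) = ψ(b)/ψ'(b) − φ_{nK}(b)/φ_{nK}'(b): one has
(σ(b)²/2)·f'(b) ≥ (ψ(b)/ψ'(b))·(nK − r·f(b)) for b ≥ 0, so f is nondecreasing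
at every point where f(b) ≤ nK/r. -/
theorem stmt_14
    (r : ℝ) (hr : 0 < r)
    (μ σ : ℝ → ℝ) (hμ : ContDiff ℝ 1 μ) (hσ : ContDiff ℝ 1 σ)
    (hσpos : ∀ x ≥ (0:ℝ), 0 < σ x ^ 2)
    (ψ : ℝ → ℝ) (hψC : ContDiff ℝ 3 ψ)
    (hψ0 : ψ 0 = 0) (hψd0 : deriv ψ 0 = 1)
    (hψpos : ∀ x > (0:ℝ), 0 < ψ x)
    (hψdpos : ∀ x ≥ (0:ℝ), 0 < deriv ψ x)
    (hψODE : ∀ x ≥ (0:ℝ),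
      (1/2) * σ x ^ 2 * deriv (deriv ψ) x + μ x * deriv ψ x - r * ψ x = 0)
    (φ : ℝ → ℝ → ℝ)
    (hφC : ∀ A ≥ (0:ℝ), ContDiff ℝ 2 (φ A))
    (hφ0 : ∀ A ≥ (0:ℝ), φ A 0 = 1)
    (hφpos : ∀ A ≥ (0:ℝ), ∀ x ≥ (0:ℝ), 0 < φ A x)
    (hφdneg : ∀ A ≥ (0:ℝ), ∀ x ≥ (0:ℝ), deriv (φ A) x < 0)
    (hφddnn : ∀ A ≥ (0:ℝ), ∀ x ≥ (0:ℝ), 0 ≤ deriv (deriv (φ A)) x)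
    (hφODE : ∀ A ≥ (0:ℝ), ∀ x ≥ (0:ℝ),
      (1/2) * σ x ^ 2 * deriv (deriv (φ A)) x + (μ x - A) * deriv (φ A) x - r * φ A x = 0)
    (n : ℕ) (hn : 1 ≤ n) (K : ℝ) (hK : 0 < K)
    (f : ℝ → ℝ)
    (hf : ∀ b, f b = ψ b / deriv ψ b
      - φ ((n : ℝ) * K) b / deriv (φ ((n : ℝ) * K)) b) :
    (∀ b ≥ (0:ℝ),
      (ψ b / deriv ψ b) * ((n : ℝ) * K - r * f b) ≤ (σ b ^ 2 / 2) * deriv f b) ∧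
    (∀ b ≥ (0:ℝ), f b ≤ (n : ℝ) * K / r → 0 ≤ deriv f b) := by
  set A : ℝ := (n : ℝ) * K with hAdef
  have hA0 : (0:ℝ) ≤ A := by positivity
  -- differentiability facts
  have hψ3 : ContDiff ℝ (2+1) ψ := by exact_mod_cast hψC
  have hψdiff : Differentiable ℝ ψ := hψC.differentiable (by norm_num)
  have hψ'C : ContDiff ℝ 2 (deriv ψ) := (contDiff_succ_iff_deriv.mp hψ3).2.2
  have hψ'diff : Differentiable ℝ (deriv ψ) := hψ'C.differentiable (by norm_num)
  have hφ2 : ContDiff ℝ (1+1) (φ A) := by exact_mod_cast hφC A hA0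
  have hφdiff : Differentiable ℝ (φ A) := (hφC A hA0).differentiable (by norm_num)
  have hφ'diff : Differentiable ℝ (deriv (φ A)) :=
    (contDiff_succ_iff_deriv.mp hφ2).2.2.differentiable (by norm_num)
  have main : ∀ b ≥ (0:ℝ),
      (ψ b / deriv ψ b) * (A - r * f b) ≤ (σ b ^ 2 / 2) * deriv f b := by
    intro b hb
    have hPd : 0 < deriv ψ b := hψdpos b hb
    have hP0 : 0 ≤ ψ b := by
      rcases eq_or_lt_of_le hb with h | h
      · rw [← h, hψ0]
      · exact (hψpos b h).le
    have hQ : 0 < φ A b := hφpos A hA0 b hb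
    have hQd : deriv (φ A) b < 0 := hφdneg A hA0 b hb
    have hQdd : 0 ≤ deriv (deriv (φ A)) b := hφddnn A hA0 b hb
    have hs : 0 < σ b ^ 2 := hσpos b hb
    have hσne : σ b ≠ 0 := fun h => by simp [h] at hs
    have h1 : HasDerivAt (fun x => ψ x / deriv ψ x)
        ((deriv ψ b * deriv ψ b - ψ b * deriv (deriv ψ) b) / deriv ψ b ^ 2) b :=
      (hψdiff b).hasDerivAt.div (hψ'diff b).hasDerivAt hPd.ne'
    have h2 : HasDerivAt (fun x => φ A x / deriv (φ A) x)
        ((deriv (φ A) b * deriv (φ A) b - φ A b * deriv (deriv (φ A)) b)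
          / deriv (φ A) b ^ 2) b :=
      (hφdiff b).hasDerivAt.div (hφ'diff b).hasDerivAt hQd.ne
    have hfeq : f = fun x => ψ x / deriv ψ x - φ A x / deriv (φ A) x := funext hf
    have hfd : HasDerivAt f
        ((deriv ψ b * deriv ψ b - ψ b * deriv (deriv ψ) b) / deriv ψ b ^ 2
          - (deriv (φ A) b * deriv (φ A) b - φ A b * deriv (deriv (φ A)) b)
            / deriv (φ A) b ^ 2) b := by
      rw [hfeq]; exact h1.sub h2
    have eqP := hψODE b hb
    have eqQ := hφODE A hA0 b hb
    set P := ψ b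
    set P' := deriv ψ b
    set P'' := deriv (deriv ψ) b
    set Q := φ A b
    set Q' := deriv (φ A) b
    set Q'' := deriv (deriv (φ A)) b
    set s := σ b ^ 2
    have hQ'2 : (0:ℝ) < Q' ^ 2 := by nlinarith
    have hc : (0:ℝ) < P' ^ 2 * Q' ^ 2 := mul_pos (by positivity) hQ'2
    have h1' : (P / P') * (A - r * f b) * (P' ^ 2 * Q' ^ 2)
        = P * P' * Q' ^ 2 * A - r * P ^ 2 * Q' ^ 2 + r * P * Q * P' * Q' := by
      rw [hf b]
      change (P / P') * (A - r * (P / P' - Q / Q')) * (P' ^ 2 * Q' ^ 2) = _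
      field_simp [hPd.ne', hQd.ne]
      ring
    have h2' : (s / 2) * deriv f b * (P' ^ 2 * Q' ^ 2)
        = (s / 2) * (Q * Q'' * P' ^ 2 - P * P'' * Q' ^ 2) := by
      rw [hfd.deriv]
      field_simp [hPd.ne', hQd.ne]
      ring
    have hdiff : (s / 2) * (Q * Q'' * P' ^ 2 - P * P'' * Q' ^ 2)
        - (P * P' * Q' ^ 2 * A - r * P ^ 2 * Q' ^ 2 + r * P * Q * P' * Q')
        = (Q * P' - P * Q') * P' * ((s / 2) * Q'') := by
      linear_combination (-(P * Q' ^ 2)) * eqP + (P * P' * Q') * eqQ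
    have hfac : 0 ≤ (Q * P' - P * Q') * P' * ((s / 2) * Q'') := by
      have h5 : 0 ≤ Q * P' - P * Q' := by nlinarith
      have h6 : 0 ≤ (s / 2) * Q'' := by positivity
      positivity
    have hle : (P / P') * (A - r * f b) * (P' ^ 2 * Q' ^ 2)
        ≤ (s / 2) * deriv f b * (P' ^ 2 * Q' ^ 2) := by
      rw [h1', h2']; linarith
    exact le_of_mul_le_mul_right hle hc
  refine ⟨main, fun b hb hfb => ?_⟩
  have hPd : 0 < deriv ψ b := hψdpos b hb
  have hP0 : 0 ≤ ψ b := by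
    rcases eq_or_lt_of_le hb with h | h
    · rw [← h, hψ0]
    · exact (hψpos b h).le
  have hs : 0 < σ b ^ 2 := hσpos b hb
  have h1 := main b hb
  have h2 : 0 ≤ A - r * f b := by
    have : r * f b ≤ A := by
      calc r * f b ≤ r * (A / r) := by nlinarith
        _ = A := by field_simp
    linarith
  have h3 : 0 ≤ (ψ b / deriv ψ b) * (A - r * f b) :=
    mul_nonneg (div_nonneg hP0 hPd.le) h2
  nlinarith
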